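/- Suppose the compact Hausdorff space X contains at least n+1 points, where n ≥ 1, and let H be an n-dimensional Haar subspace of C(X). Let f* ∈ H be a best simultaneous approximation (BSA) to {f_a}_{a∈A} from H which satisfies, for some positive integer k with 1 ≤ k ≤ n+1 and some a₁,…,a_k ∈ A, x₁,…,x_k ∈ X, and positive reals λ₁,…,λ_k with λ₁+⋯+λ_k = 1: (i') Σ_{i=1}^{k} λᵢ (f_{aᵢ}(xᵢ) − f*(xᵢ)) f(xᵢ) = 0 for all f ∈ H; and (ii) |f_{aᵢ}(xᵢ) − f*(xᵢ)| = ‖f_{aᵢ} − f*‖ = max_{a∈A} ‖f_a − f*‖ for all i with 1 ≤ i ≤ k. If the points x₁,…,x_k are pairwise distinct and the common value in (ii) is nonzero, then there exists a positive real number γ such that max_{a∈A} ‖f_a − h‖ ≥ max_{a∈A} ‖f_a − f*‖ + γ ‖f* − h‖ for all h ∈ H. -/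

import Mathlib

/-- `H` is an `n`-dimensional Haar subspace of `C(X, ℝ)`: it has dimension `n`
and interpolation at any `n` distinct points is uniquely solvable in `H`. -/
def IsHaarSubspace {X : Type*} [TopologicalSpace X] (n : ℕ)
    (H : Submodule ℝ C(X, ℝ)) : Prop :=
  Module.finrank ℝ H = n ∧
    ∀ x : Fin n → X, Function.Injective x → ∀ r : Fin n → ℝ,
      ∃! f : H, ∀ i, (f : C(X, ℝ)) (x i) = r i

set_option maxHeartbeats 1000000 in
/-- **Strong unicity theorem.** Suppose `X` has at least `n + 1` points and
`f⋆ ∈ H` is a BSA to `{f_a}_{a ∈ A}` from the `n`-dimensional Haar subspace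
`H` satisfying (i') and (ii) for some `1 ≤ k ≤ n + 1` with distinct points
`x₁, …, x_k` and nonzero common value in (ii). Then there is `γ > 0` with
`max_a ‖f_a - h‖ ≥ max_a ‖f_a - f⋆‖ + γ ‖f⋆ - h‖` for all `h ∈ H`. -/
theorem strong_unicity
    {X : Type*} [TopologicalSpace X] [CompactSpace X] [T2Space X]
    {A : Type*} [TopologicalSpace A] [CompactSpace A] [T2Space A] [Nonempty A]
    {n : ℕ} (hn : 1 ≤ n)
    (hX : ∃ y : Fin (n + 1) → X, Function.Injective y)
    (H : Submodule ℝ C(X, ℝ)) (hHaar : IsHaarSubspace n H)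
    (F : A → C(X, ℝ)) (hF : Continuous F)
    (fs : C(X, ℝ)) (hfs : fs ∈ H)
    (hBSA : ∀ f ∈ H, (⨆ a : A, ‖F a - fs‖) ≤ ⨆ a : A, ‖F a - f‖)
    (k : ℕ) (hk1 : 1 ≤ k) (hk2 : k ≤ n + 1)
    (a : Fin k → A) (x : Fin k → X) (lam : Fin k → ℝ)
    (hlam : ∀ i, 0 < lam i) (hsum : (∑ i, lam i) = 1)
    (hi' : ∀ f ∈ H, (∑ i, lam i * (F (a i) (x i) - fs (x i)) * f (x i)) = 0)
    (hii : ∀ i, |F (a i) (x i) - fs (x i)| = ‖F (a i) - fs‖ ∧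
        ‖F (a i) - fs‖ = ⨆ b : A, ‖F b - fs‖)
    (hx : Function.Injective x)
    (hne : (⨆ b : A, ‖F b - fs‖) ≠ 0) :
    ∃ γ : ℝ, 0 < γ ∧
      ∀ h ∈ H, (⨆ b : A, ‖F b - fs‖) + γ * ‖fs - h‖ ≤ ⨆ b : A, ‖F b - h‖ := by
  classical
  obtain ⟨hdim, hint⟩ := hHaar
  set E := ⨆ b : A, ‖F b - fs‖ with hEdef
  -- boundedness of the families of norms
  have hbdd : ∀ h : C(X, ℝ), BddAbove (Set.range fun b : A => ‖F b - h‖) := fun h =>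
    (isCompact_range ((hF.sub continuous_const).norm)).bddAbove
  have hE0 : 0 < E := by
    have h1 : ‖F (Classical.arbitrary A) - fs‖ ≤ E := le_ciSup (hbdd fs) _
    exact lt_of_le_of_ne (le_trans (norm_nonneg _) h1) (Ne.symm hne)
  have habs : ∀ i, |F (a i) (x i) - fs (x i)| = E := fun i => (hii i).1.trans (hii i).2
  -- the signs
  obtain ⟨σ, hσE, hσ2, hσabs⟩ :
      ∃ σ : Fin k → ℝ, (∀ i, σ i * E = F (a i) (x i) - fs (x i)) ∧
        (∀ i, σ i * σ i = 1) ∧ ∀ i, |σ i| = 1 := by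
    refine ⟨fun i => (F (a i) (x i) - fs (x i)) / E, fun i => div_mul_cancel₀ _ hE0.ne', ?_, ?_⟩
    · intro i
      rw [div_mul_div_comm, ← abs_mul_abs_self, habs i, div_self (by positivity)]
    · intro i
      rw [abs_div, habs i, abs_of_pos hE0, div_self hE0.ne']
  have horth : ∀ f : C(X, ℝ), f ∈ H → (∑ i, lam i * (σ i * f (x i))) = 0 := by
    intro f hf
    have h1 := hi' f hf
    have h2 : (∑ i, lam i * (F (a i) (x i) - fs (x i)) * f (x i))
        = E * ∑ i, lam i * (σ i * f (x i)) := by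
      rw [Finset.mul_sum]
      refine Finset.sum_congr rfl fun i _ => ?_
      rw [← hσE i]; ring
    rw [h2] at h1
    exact (mul_eq_zero.1 h1).resolve_left hE0.ne'
  -- k must equal n + 1
  have hkeq : k = n + 1 := by
    by_contra hk'
    have hkn : k ≤ n := by omega
    obtain ⟨y, hy⟩ := hX
    set S : Finset X := Finset.univ.image x with hSdef
    have hS : S.card = k := by
      rw [hSdef, Finset.card_image_of_injective _ hx, Finset.card_univ, Fintype.card_fin]
    set T : Finset X := Finset.univ.image y with hTdef
    have hT : T.card = n + 1 := by
      rw [hTdef, Finset.card_image_of_injective _ hy, Finset.card_univ, Fintype.card_fin]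
    have hTS : n - k ≤ (T \ S).card := by
      have := Finset.le_card_sdiff S T
      omega
    obtain ⟨U, hUsub, hU⟩ := Finset.exists_subset_card_eq hTS
    have hdisj : Disjoint S U :=
      (Finset.sdiff_disjoint.mono_left hUsub).symm
    have hW : (S ∪ U).card = n := by
      rw [Finset.card_union_of_disjoint hdisj, hS, hU]; omega
    let e := Finset.equivFinOfCardEq hW
    let z : Fin n → X := fun j => ((e.symm j : (S ∪ U : Finset X)) : X)
    have hz : Function.Injective z := fun i j hij => e.symm.injective (Subtype.ext hij)
    have hmem : ∀ i, x i ∈ S ∪ U := fun i =>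
      Finset.mem_union_left _ (Finset.mem_image_of_mem x (Finset.mem_univ i))
    set r : Fin n → ℝ := fun j => if hh : ∃ i, x i = z j then σ hh.choose else 0 with hrdef
    obtain ⟨f, hf, -⟩ := hint z hz r
    have hfx : ∀ i, (f : C(X, ℝ)) (x i) = σ i := by
      intro i
      have h1 : z (e ⟨x i, hmem i⟩) = x i := by
        show ((e.symm (e ⟨x i, hmem i⟩) : (S ∪ U : Finset X)) : X) = x i
        rw [Equiv.symm_apply_apply]
      have h2 : ∃ i', x i' = z (e ⟨x i, hmem i⟩) := ⟨i, h1.symm⟩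
      have h3 := hf (e ⟨x i, hmem i⟩)
      rw [h1] at h3
      rw [h3, hrdef]
      simp only [dif_pos h2]
      have h4 : x h2.choose = x i := h2.choose_spec.trans h1
      rw [hx h4]
    have h5 := horth f f.2
    simp only [hfx] at h5
    have h6 : (∑ i, lam i * (σ i * σ i)) = 1 := by
      calc (∑ i, lam i * (σ i * σ i)) = ∑ i, lam i := by
            refine Finset.sum_congr rfl fun i _ => ?_
            rw [hσ2 i, mul_one]
        _ = 1 := hsum
    rw [h5] at h6
    exact zero_ne_one h6
  subst hkeq
  -- evaluation at the x i is injective on H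
  have hinjH : ∀ g : C(X, ℝ), g ∈ H → (∀ i, g (x i) = 0) → g = 0 := by
    intro g hg hgz
    obtain ⟨f, -, huniq⟩ := hint (fun j : Fin n => x j.castSucc)
      (fun i j hij => Fin.castSucc_injective n (hx hij)) 0
    have h1 : (⟨g, hg⟩ : H) = f := huniq ⟨g, hg⟩ (fun j => by simpa using hgz j.castSucc)
    have h2 : (0 : H) = f := huniq 0 (fun j => by simp)
    have : (⟨g, hg⟩ : H) = (0 : H) := h1.trans h2.symm
    simpa using congrArg Subtype.val this
  have hFD : FiniteDimensional ℝ H := FiniteDimensional.of_finrank_pos (by rw [hdim]; omega)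
  -- evaluation as a linear map
  let T : H →ₗ[ℝ] (Fin (n + 1) → ℝ) :=
    { toFun := fun g j => (g : C(X, ℝ)) (x j)
      map_add' := fun g h => by ext j; simp
      map_smul' := fun c g => by ext j; simp }
  have hker : LinearMap.ker T = ⊥ := by
    rw [LinearMap.ker_eq_bot']
    intro g hg0
    have : ∀ j, (g : C(X, ℝ)) (x j) = 0 := fun j => congrFun hg0 j
    exact Subtype.ext (hinjH _ g.2 this)
  obtain ⟨K, hK, hanti⟩ := LinearMap.exists_antilipschitzWith (𝕜 := ℝ) (E := H) (F := Fin (n + 1) → ℝ) T hker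
  have hKpos : (0 : ℝ) < K := hK
  -- the minimal lambda
  have huniv : (Finset.univ : Finset (Fin (n + 1))).Nonempty := Finset.univ_nonempty
  set lmin := Finset.univ.inf' huniv lam with hlmindef
  have hlmin : 0 < lmin := (Finset.lt_inf'_iff _).2 fun i _ => hlam i
  have hlminle : ∀ i, lmin ≤ lam i := fun i => Finset.inf'_le _ (Finset.mem_univ i)
  refine ⟨lmin / K, by positivity, ?_⟩
  intro h hh
  set g : C(X, ℝ) := fs - h with hgdef
  have hg : g ∈ H := H.sub_mem hfs hh
  set M := Finset.univ.sup' huniv (fun i => σ i * g (x i)) with hMdef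
  have hle : ∀ i, σ i * g (x i) ≤ M := fun i =>
    Finset.le_sup' (fun i => σ i * g (x i)) (Finset.mem_univ i)
  have hsum0 := horth g hg
  have hM0 : 0 ≤ M := by
    by_contra hM'
    push_neg at hM'
    have : (∑ i, lam i * (σ i * g (x i))) ≤ ∑ i, lam i * M :=
      Finset.sum_le_sum fun i _ => mul_le_mul_of_nonneg_left (hle i) (hlam i).le
    rw [hsum0, ← Finset.sum_mul, hsum, one_mul] at this
    linarith
  -- each |g (x i)| is at most M / lmin
  have hbound : ∀ i, |g (x i)| ≤ M / lmin := by
    intro i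
    have key : lam i * |g (x i)| ≤ M := by
      have hadd := Finset.add_sum_erase Finset.univ (fun j => lam j * (σ j * g (x j)))
        (Finset.mem_univ i)
      rw [hsum0] at hadd
      have herase : (∑ j ∈ Finset.univ.erase i, lam j * (σ j * g (x j))) ≤ M := by
        calc (∑ j ∈ Finset.univ.erase i, lam j * (σ j * g (x j)))
            ≤ ∑ j ∈ Finset.univ.erase i, lam j * M :=
              Finset.sum_le_sum fun j _ => mul_le_mul_of_nonneg_left (hle j) (hlam j).le
          _ ≤ ∑ j, lam j * M := Finset.sum_le_sum_of_subset_of_nonneg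
              (Finset.erase_subset _ _) (fun j _ _ => mul_nonneg (hlam j).le hM0)
          _ = M := by rw [← Finset.sum_mul, hsum, one_mul]
      have hlami1 : lam i ≤ 1 := by
        have h9 := Finset.single_le_sum (fun j (_ : j ∈ Finset.univ) => (hlam j).le)
          (Finset.mem_univ i)
        rw [hsum] at h9; exact h9
      have hlow : -M ≤ lam i * (σ i * g (x i)) := by linarith
      have hhigh : lam i * (σ i * g (x i)) ≤ M := by
        have h8 := mul_le_mul_of_nonneg_left (hle i) (hlam i).le
        nlinarith
      have habs' : |lam i * (σ i * g (x i))| ≤ M := abs_le.2 ⟨hlow, hhigh⟩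
      calc lam i * |g (x i)| = |lam i * (σ i * g (x i))| := by
            rw [abs_mul, abs_mul, hσabs i, one_mul, abs_of_pos (hlam i)]
        _ ≤ M := habs'
    rw [le_div_iff₀ hlmin]
    calc |g (x i)| * lmin ≤ |g (x i)| * lam i :=
          mul_le_mul_of_nonneg_left (hlminle i) (abs_nonneg _)
      _ = lam i * |g (x i)| := mul_comm _ _
      _ ≤ M := key
  -- the antilipschitz estimate
  have hnormT : ‖T ⟨g, hg⟩‖ ≤ M / lmin := by
    rw [pi_norm_le_iff_of_nonneg (by positivity)]
    intro j
    simpa [T, Real.norm_eq_abs] using hbound j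
  have hnormg : ‖fs - h‖ ≤ (K : ℝ) * (M / lmin) := by
    have h1 := hanti.le_mul_dist (⟨g, hg⟩ : H) 0
    rw [dist_zero_right, map_zero, dist_zero_right] at h1
    have h2 : ‖(⟨g, hg⟩ : H)‖ = ‖fs - h‖ := rfl
    replace h1 : ‖fs - h‖ ≤ (K : ℝ) * ‖T ⟨g, hg⟩‖ := h1
    exact le_trans h1 (mul_le_mul_of_nonneg_left hnormT (by positivity))
  have hgamma : lmin / K * ‖fs - h‖ ≤ M := by
    rw [div_mul_eq_mul_div, div_le_iff₀ hKpos]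
    calc lmin * ‖fs - h‖ ≤ lmin * ((K : ℝ) * (M / lmin)) :=
          mul_le_mul_of_nonneg_left hnormg hlmin.le
      _ = M * K := by field_simp
  -- pick the index attaining the max
  obtain ⟨j, -, hj⟩ := Finset.exists_mem_eq_sup' huniv (fun i => σ i * g (x i))
  have hEM : E + M = σ j * (F (a j) (x j) - h (x j)) := by
    have h1 : σ j * (F (a j) (x j) - fs (x j)) = E := by
      rw [← hσE j, ← mul_assoc, hσ2 j, one_mul]
    have h2 : σ j * g (x j) = M := hj.symm
    have h3 : g (x j) = fs (x j) - h (x j) := by rw [hgdef]; simp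
    rw [← h1, ← h2, h3]; ring
  have hfinal : σ j * (F (a j) (x j) - h (x j)) ≤ ⨆ b : A, ‖F b - h‖ := by
    have h1 : σ j * (F (a j) (x j) - h (x j)) ≤ |F (a j) (x j) - h (x j)| := by
      calc σ j * (F (a j) (x j) - h (x j)) ≤ |σ j * (F (a j) (x j) - h (x j))| := le_abs_self _
        _ = |F (a j) (x j) - h (x j)| := by rw [abs_mul, hσabs j, one_mul]
    have h2 : |F (a j) (x j) - h (x j)| ≤ ‖F (a j) - h‖ := by
      have := ContinuousMap.norm_coe_le_norm (F (a j) - h) (x j)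
      simpa [Real.norm_eq_abs] using this
    exact le_trans h1 (le_trans h2 (le_ciSup (hbdd h) (a j)))
  calc E + lmin / K * ‖fs - h‖ ≤ E + M := by linarith
    _ = σ j * (F (a j) (x j) - h (x j)) := hEM
    _ ≤ ⨆ b : A, ‖F b - h‖ := hfinal
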